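/- Let f, g : ℕ → ℕ with 1 ≤ g(k) < f(k) for all k. Then for every m ∈ ℕ, 𝔠(f·⌊f/g⌋^m, g) = 𝔠(f,g), where (f·⌊f/g⌋^m)(k) = f(k)·⌊f(k)/g(k)⌋^m and ⌊·⌋ is the integer part. -/

import Mathlib

/-- `B` is a `g`-slalom: a sequence of finite sets of naturals with `|B k| = g k`. -/
def IsSlalom (g : ℕ → ℕ) (B : ℕ → Finset ℕ) : Prop := ∀ k, (B k).card = g k

/-- `x` is covered by the slalom `B`. -/
def Covers (B : ℕ → Finset ℕ) (x : ℕ → ℕ) : Prop := ∀ k, x k ∈ B k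

/-- `slalomCov f g` is the least cardinality of a family of `g`-slaloms covering
every `x : ℕ → ℕ` with `x k < f k` for all `k`. -/
noncomputable def slalomCov (f g : ℕ → ℕ) : Cardinal :=
  sInf { c : Cardinal | ∃ 𝓑 : Set (ℕ → Finset ℕ),
    (∀ B ∈ 𝓑, IsSlalom g B) ∧
    (∀ x : ℕ → ℕ, (∀ k, x k < f k) → ∃ B ∈ 𝓑, Covers B x) ∧
    c = Cardinal.mk 𝓑 }

namespace SlalomAux

def covSet (f g : ℕ → ℕ) : Set Cardinal :=
  { c : Cardinal | ∃ 𝓑 : Set (ℕ → Finset ℕ),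
    (∀ B ∈ 𝓑, IsSlalom g B) ∧
    (∀ x : ℕ → ℕ, (∀ k, x k < f k) → ∃ B ∈ 𝓑, Covers B x) ∧
    c = Cardinal.mk 𝓑 }

lemma slalomCov_eq (f g : ℕ → ℕ) : slalomCov f g = sInf (covSet f g) := rfl

lemma covSet_nonempty (f g : ℕ → ℕ) (hg : ∀ k, 1 ≤ g k) : (covSet f g).Nonempty := by
  refine ⟨_, {B | IsSlalom g B}, fun B hB => hB, ?_, rfl⟩
  intro x _
  refine ⟨fun k => (Finset.range (g k)).image (fun j => x k + j), ?_, ?_⟩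
  · intro k
    rw [Finset.card_image_of_injective _ (add_right_injective _), Finset.card_range]
  · intro k
    exact Finset.mem_image.mpr ⟨0, Finset.mem_range.mpr (hg k), add_zero _⟩

lemma slalomCov_mono {f₁ f₂ : ℕ → ℕ} (g : ℕ → ℕ) (hg : ∀ k, 1 ≤ g k)
    (h : ∀ k, f₁ k ≤ f₂ k) : slalomCov f₁ g ≤ slalomCov f₂ g := by
  refine csInf_le_csInf (OrderBot.bddBelow _) (covSet_nonempty f₂ g hg) ?_
  rintro c ⟨𝓑, hs, hcov, hc⟩
  exact ⟨𝓑, hs, fun x hx => hcov x (fun k => lt_of_lt_of_le (hx k) (h k)), hc⟩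

lemma exists_lt_not_mem {A : Finset ℕ} {n : ℕ} (h : A.card < n) : ∃ m, m < n ∧ m ∉ A := by
  by_contra hc
  push_neg at hc
  have hsub : Finset.range n ⊆ A := fun m hm => hc m (Finset.mem_range.mp hm)
  have := Finset.card_le_card hsub
  simp only [Finset.card_range] at this
  omega

lemma aleph0_le_slalomCov (f g : ℕ → ℕ) (hg : ∀ k, 1 ≤ g k) (hgf : ∀ k, g k < f k) :
    Cardinal.aleph0 ≤ slalomCov f g := by
  refine le_csInf (covSet_nonempty f g hg) ?_
  rintro c ⟨𝓑, hs, hcov, rfl⟩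
  by_contra hlt
  push_neg at hlt
  have hfin : 𝓑.Finite := Cardinal.lt_aleph0_iff_set_finite.mp hlt
  set l := hfin.toFinset.toList with hl
  -- choose, at coordinate k, a value avoiding the k-th slalom in the list
  have hch : ∀ k, ∃ m, m < f k ∧ ∀ h : k < l.length, m ∉ (l.get ⟨k, h⟩) k := by
    intro k
    by_cases h : k < l.length
    · have hB : l.get ⟨k, h⟩ ∈ 𝓑 :=
        hfin.mem_toFinset.mp (Finset.mem_toList.mp (List.get_mem l ⟨k, h⟩))
      have hcard : ((l.get ⟨k, h⟩) k).card < f k := by rw [hs _ hB k]; exact hgf k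
      obtain ⟨m, hm1, hm2⟩ := exists_lt_not_mem hcard
      exact ⟨m, hm1, fun _ => hm2⟩
    · exact ⟨0, by have := hg k; have := hgf k; omega, fun h' => absurd h' h⟩
  choose x hx1 hx2 using hch
  obtain ⟨B, hB, hcB⟩ := hcov x hx1
  have hBl : B ∈ l := Finset.mem_toList.mpr (hfin.mem_toFinset.mpr hB)
  obtain ⟨i, hi⟩ := List.mem_iff_get.mp hBl
  exact hx2 i.1 i.2 (by rw [Fin.eta, hi]; exact hcB i.1)




/-- Blow up each element `b` of `A` to the interval `[b*d, b*d+d)`. -/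
def blow (A : Finset ℕ) (d : ℕ) : Finset ℕ :=
  A.biUnion fun b => (Finset.range d).image fun j => b * d + j

lemma mem_blow {A : Finset ℕ} {d x : ℕ} (hd : 0 < d) (hx : x / d ∈ A) : x ∈ blow A d := by
  simp only [blow, Finset.mem_biUnion, Finset.mem_image, Finset.mem_range]
  refine ⟨x / d, hx, x % d, Nat.mod_lt _ hd, ?_⟩
  rw [mul_comm]; exact Nat.div_add_mod x d

lemma card_blow (A : Finset ℕ) {d : ℕ} (hd : 0 < d) : (blow A d).card = A.card * d := by
  rw [blow, Finset.card_biUnion]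
  · simp only [Finset.card_image_of_injective _ (add_right_injective _), Finset.card_range]
    simp [Finset.sum_const, mul_comm]
  · intro b hb b' hb' hne
    simp only [Finset.disjoint_left, Finset.mem_image, Finset.mem_range]
    rintro u ⟨j, hj, rfl⟩ ⟨j', hj', he⟩
    apply hne
    have h1 : (b * d + j) / d = b := by
      rw [add_comm, Nat.add_mul_div_right _ _ hd, Nat.div_eq_of_lt hj, zero_add]
    have h2 : (b' * d + j') / d = b' := by
      rw [add_comm, Nat.add_mul_div_right _ _ hd, Nat.div_eq_of_lt hj', zero_add]
    rw [← h1, ← he, h2]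

/-- Enumeration of a finset, padded injectively above its max. -/
noncomputable def enum (S : Finset ℕ) (i : ℕ) : ℕ :=
  if h : i < (S.sort (· ≤ ·)).length then (S.sort (· ≤ ·)).get ⟨i, h⟩ else S.sup id + 1 + i

lemma enum_injective (S : Finset ℕ) : Function.Injective (enum S) := by
  have hnd := S.sort_nodup (· ≤ ·)
  have hmem : ∀ (i : Fin (S.sort (· ≤ ·)).length), (S.sort (· ≤ ·)).get i ≤ S.sup id := by
    intro i
    exact Finset.le_sup (f := id) ((Finset.mem_sort _).mp ((S.sort (· ≤ ·)).get_mem _))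
  intro i j hij
  unfold enum at hij
  split_ifs at hij with h1 h2 h2
  · exact Fin.mk.injEq _ _ _ _ ▸ (hnd.get_inj_iff.mp hij)
  · exact absurd hij (by have := hmem ⟨i, h1⟩; omega)
  · exact absurd hij (by have := hmem ⟨j, h2⟩; omega)
  · omega

lemma enum_mem {S : Finset ℕ} {x : ℕ} (hx : x ∈ S) : ∃ i < S.card, enum S i = x := by
  have hx' : x ∈ S.sort (· ≤ ·) := (Finset.mem_sort _).mpr hx
  have hlt : (S.sort (· ≤ ·)).idxOf x < (S.sort (· ≤ ·)).length :=
    List.idxOf_lt_length_iff.mpr hx'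
  refine ⟨(S.sort (· ≤ ·)).idxOf x, by rwa [Finset.length_sort] at hlt, ?_⟩
  rw [enum, dif_pos hlt]
  exact List.idxOf_get hlt



/-- Key step: extending the bound from `f` to `f * d` costs nothing, provided `g * d ≤ f`. -/
lemma key (f g d : ℕ → ℕ) (hg : ∀ k, 1 ≤ g k) (hgf : ∀ k, g k < f k)
    (hd : ∀ k, 1 ≤ d k) (hgd : ∀ k, g k * d k ≤ f k) :
    slalomCov (fun k => f k * d k) g ≤ slalomCov f g := by
  obtain ⟨𝓑, hs, hcov, hc⟩ := csInf_mem (covSet_nonempty f g hg)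
  have hκ : Cardinal.aleph0 ≤ Cardinal.mk 𝓑 := by
    have := aleph0_le_slalomCov f g hg hgf
    rwa [slalomCov_eq, hc] at this
  set Cmb : (ℕ → Finset ℕ) × (ℕ → Finset ℕ) → (ℕ → Finset ℕ) :=
    fun p k => (p.2 k).image (enum (blow (p.1 k) (d k))) with hCmb
  set 𝓒 : Set (ℕ → Finset ℕ) := Cmb '' (𝓑 ×ˢ 𝓑) with h𝓒
  have hmem : Cardinal.mk 𝓒 ∈ covSet (fun k => f k * d k) g := by
    refine ⟨𝓒, ?_, ?_, rfl⟩
    · rintro _ ⟨⟨B, B'⟩, ⟨hB, hB'⟩, rfl⟩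
      intro k
      rw [hCmb]
      simp only
      rw [Finset.card_image_of_injective _ (enum_injective _)]
      exact hs B' hB' k
    · intro x hx
      have hy : ∀ k, x k / d k < f k := fun k =>
        (Nat.div_lt_iff_lt_mul (hd k)).mpr (hx k)
      obtain ⟨B, hB, hyB⟩ := hcov _ hy
      have hxS : ∀ k, x k ∈ blow (B k) (d k) := fun k => mem_blow (hd k) (hyB k)
      have hch : ∀ k, ∃ i, i < f k ∧ enum (blow (B k) (d k)) i = x k := by
        intro k
        obtain ⟨i, hi1, hi2⟩ := enum_mem (hxS k)
        refine ⟨i, ?_, hi2⟩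
        rw [card_blow _ (hd k), hs B hB k] at hi1
        exact lt_of_lt_of_le hi1 (hgd k)
      choose z hz1 hz2 using hch
      obtain ⟨B', hB', hzB⟩ := hcov z hz1
      refine ⟨Cmb (B, B'), ⟨(B, B'), ⟨hB, hB'⟩, rfl⟩, ?_⟩
      intro k
      exact Finset.mem_image.mpr ⟨z k, hzB k, hz2 k⟩
  have hle : slalomCov (fun k => f k * d k) g ≤ Cardinal.mk 𝓒 :=
    csInf_le (OrderBot.bddBelow _) hmem
  refine hle.trans ?_
  have h1 : Cardinal.mk 𝓒 ≤ Cardinal.mk ↥(𝓑 ×ˢ 𝓑) := Cardinal.mk_image_le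
  have h2 : Cardinal.mk ↥(𝓑 ×ˢ 𝓑) = Cardinal.mk 𝓑 * Cardinal.mk 𝓑 := by
    rw [Cardinal.mk_congr (Equiv.Set.prod 𝓑 𝓑), Cardinal.mk_prod]
    simp
  rw [slalomCov_eq, hc]
  refine h1.trans ?_
  rw [h2, Cardinal.mul_eq_self hκ]

end SlalomAux

theorem slalomCov_mul_div_pow_eq (f g : ℕ → ℕ) (hg : ∀ k, 1 ≤ g k) (hgf : ∀ k, g k < f k)
    (m : ℕ) :
    slalomCov (fun k => f k * (f k / g k) ^ m) g = slalomCov f g := by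
  have hd : ∀ k, 1 ≤ f k / g k := fun k =>
    (Nat.one_le_div_iff (hg k)).mpr (le_of_lt (hgf k))
  induction m with
  | zero =>
      have : (fun k => f k * (f k / g k) ^ 0) = f := by funext k; simp
      rw [this]
  | succ n ih =>
      refine le_antisymm ?_ ?_
      · have heq : (fun k => f k * (f k / g k) ^ (n + 1))
            = fun k => (f k * (f k / g k) ^ n) * (f k / g k) := by
          funext k; ring
        rw [heq]
        refine le_trans (SlalomAux.key (fun k => f k * (f k / g k) ^ n) g
          (fun k => f k / g k) hg ?_ hd ?_) ih.le
        · intro k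
          calc g k < f k := hgf k
            _ ≤ f k * (f k / g k) ^ n := Nat.le_mul_of_pos_right _ (pow_pos (hd k) n)
        · intro k
          calc g k * (f k / g k) ≤ f k := by
                rw [mul_comm]; exact Nat.div_mul_le_self (f k) (g k)
            _ ≤ f k * (f k / g k) ^ n := Nat.le_mul_of_pos_right _ (pow_pos (hd k) n)
      · refine SlalomAux.slalomCov_mono g hg ?_
        intro k
        exact Nat.le_mul_of_pos_right _ (pow_pos (hd k) (n + 1))
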